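/- Let p be a prime, l, m ≥ 1 integers with l ≤ m, and let A = Id + p^l·c̃ and B = Id + p^m·d̃ be invertible n×n matrices over ℤ/p^{l+m+1}. Then the commutator satisfies A·B·A⁻¹·B⁻¹ = Id + p^{l+m}·[c,d], where c, d denote the reductions of c̃, d̃ modulo p and [c,d] = cd - dc (the identity holding in matrices over ℤ/p^{l+m+1}, with p^{l+m}·[c,d] interpreted via arbitrary lifts of c, d). -/
import Mathlib


/-- commutator of `1 + p^l c` and `1 + p^m d` over `ℤ/p^{l+m+1}`. -/
theorem stmt_0 (p : ℕ) [Fact p.Prime] (n l m : ℕ) (hl : 1 ≤ l) (hm : 1 ≤ m) (hlm : l ≤ m)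
    (c d A B : Matrix (Fin n) (Fin n) (ZMod (p ^ (l + m + 1))))
    (hA : A = 1 + (p : ZMod (p ^ (l + m + 1))) ^ l • c)
    (hB : B = 1 + (p : ZMod (p ^ (l + m + 1))) ^ m • d)
    (hAu : IsUnit A) (hBu : IsUnit B) :
    A * B * A⁻¹ * B⁻¹ =
      1 + (p : ZMod (p ^ (l + m + 1))) ^ (l + m) • (c * d - d * c) := by
  set t : ZMod (p ^ (l + m + 1)) := (p : ZMod (p ^ (l + m + 1))) with ht
  have hpow : t ^ (l + m + 1) = 0 := by
    rw [ht, ← Nat.cast_pow, ZMod.natCast_self]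
  clear_value t
  have hz : ∀ k : ℕ, l + m + 1 ≤ k → t ^ k = 0 := by
    intro k hk
    obtain ⟨j, rfl⟩ : ∃ j, k = (l + m + 1) + j := ⟨k - (l + m + 1), by omega⟩
    rw [pow_add t (l + m + 1) j, hpow, zero_mul]
  have h1 : t ^ m * t ^ (l + m) = 0 := by rw [← pow_add]; exact hz _ (by omega)
  have h2 : t ^ l * t ^ (l + m) = 0 := by rw [← pow_add]; exact hz _ (by omega)
  have h3 : t ^ (l + m) * t ^ (l + m) = 0 := by rw [← pow_add]; exact hz _ (by omega)
  have h4 : t ^ l * t ^ m = t ^ (l + m) := (pow_add t l m).symm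
  have h5 : t ^ m * t ^ l = t ^ (l + m) := by rw [mul_comm]; exact h4
  have hdA : IsUnit A.det := (Matrix.isUnit_iff_isUnit_det A).mp hAu
  have hdB : IsUnit B.det := (Matrix.isUnit_iff_isUnit_det B).mp hBu
  have key : A * B = (1 + t ^ (l + m) • (c * d - d * c)) * (B * A) := by
    rw [hA, hB]
    simp only [mul_add, add_mul, mul_one, one_mul, smul_mul_smul_comm, smul_mul_assoc,
      mul_smul_comm, smul_smul, h1, h2, h3, h4, h5, zero_smul, add_zero, smul_sub, sub_mul,
      mul_sub, sub_smul, smul_add]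
    abel
  calc A * B * A⁻¹ * B⁻¹
      = (1 + t ^ (l + m) • (c * d - d * c)) * (B * (A * A⁻¹)) * B⁻¹ := by
        rw [key]; noncomm_ring
    _ = 1 + t ^ (l + m) • (c * d - d * c) := by
        rw [Matrix.mul_nonsing_inv A hdA, mul_one, Matrix.mul_assoc,
          Matrix.mul_nonsing_inv B hdB, mul_one]
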